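/- Let K be a field with more than 2 elements, p ≥ 1 an integer, and f: M_{1,p}(K) → K, g: M_{p,1}(K) → K linear forms such that f(L) + g(C) = 0 for every pair (L,C) with LC ≠ 0. Then f = 0 and g = 0. -/
import Mathlib


/-- If `|K| > 2`, `p ≥ 1`, and `f, g` are linear forms on row and column vectors
with `f(L) + g(C) = 0` whenever `LC ≠ 0`, then `f = 0` and `g = 0`. -/
theorem stmt6 {K : Type*} [Field K] (hK : (2 : Cardinal) < Cardinal.mk K) (p : ℕ) (hp : 1 ≤ p)
    (f : Matrix (Fin 1) (Fin p) K →ₗ[K] K) (g : Matrix (Fin p) (Fin 1) K →ₗ[K] K)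
    (h : ∀ (L : Matrix (Fin 1) (Fin p) K) (C : Matrix (Fin p) (Fin 1) K),
      L * C ≠ 0 → f L + g C = 0) :
    f = 0 ∧ g = 0 := by
  -- get a ∈ K, a ≠ 0, a ≠ 1
  obtain ⟨a, ha0, ha1⟩ : ∃ a : K, a ≠ 0 ∧ a ≠ 1 := by
    by_contra hc
    push_neg at hc
    have hsub : (Set.univ : Set K) ⊆ {0, 1} := by
      intro x _
      rcases eq_or_ne x 0 with hx | hx
      · exact Or.inl hx
      · exact Or.inr (hc x hx)
    have h2 := Cardinal.mk_le_mk_of_subset hsub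
    rw [Cardinal.mk_univ] at h2
    have h3 : Cardinal.mk ({0, 1} : Set K) ≤ 2 := by
      calc Cardinal.mk ({0, 1} : Set K) ≤ Cardinal.mk ({1} : Set K) + 1 := Cardinal.mk_insert_le
        _ ≤ 2 := by rw [Cardinal.mk_singleton, one_add_one_eq_two]
    exact absurd hK (not_lt.mpr (h2.trans h3))
  -- for any nonzero L there is C with L*C ≠ 0
  have key : ∀ L : Matrix (Fin 1) (Fin p) K, L ≠ 0 → ∃ C : Matrix (Fin p) (Fin 1) K, L * C ≠ 0 := by
    intro L hL
    have : ∃ j, L 0 j ≠ 0 := by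
      by_contra hc
      push_neg at hc
      apply hL
      ext i j
      fin_cases i
      simp [hc j]
    obtain ⟨j, hj⟩ := this
    refine ⟨Matrix.of fun i _ => if i = j then 1 else 0, ?_⟩
    intro hz
    have h00 : (L * Matrix.of fun i _ => if i = j then (1:K) else 0) 0 0 = 0 :=
      congrFun (congrFun hz 0) 0
    rw [Matrix.mul_apply] at h00
    apply hj
    simpa using h00
  have hf : ∀ L : Matrix (Fin 1) (Fin p) K, f L = 0 := by
    intro L
    rcases eq_or_ne L 0 with hL | hL
    · simp [hL]
    obtain ⟨C, hC⟩ := key L hL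
    have h1 := h L C hC
    have h2 : (a • L) * C ≠ 0 := by
      rw [Matrix.smul_mul]
      exact fun hz => hC (by simpa [ha0] using smul_eq_zero.mp hz)
    have h3 := h (a • L) C h2
    rw [map_smul, smul_eq_mul] at h3
    have : (a - 1) * f L = 0 := by ring_nf; linear_combination h3 - h1
    rcases mul_eq_zero.mp this with h4 | h4
    · exact absurd (sub_eq_zero.mp h4) ha1
    · exact h4
  have hg : ∀ C : Matrix (Fin p) (Fin 1) K, g C = 0 := by
    intro C
    rcases eq_or_ne C 0 with hC | hC
    · simp [hC]
    have : ∃ j, C j 0 ≠ 0 := by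
      by_contra hc
      push_neg at hc
      apply hC
      ext i k
      fin_cases k
      simp [hc i]
    obtain ⟨j, hj⟩ := this
    have hLC : (Matrix.of fun (_ : Fin 1) i => if i = j then (1:K) else 0) * C ≠ 0 := by
      intro hz
      have h00 : ((Matrix.of fun (_ : Fin 1) i => if i = j then (1:K) else 0) * C) 0 0 = 0 :=
        congrFun (congrFun hz 0) 0
      rw [Matrix.mul_apply] at h00
      apply hj
      simpa using h00
    have := h _ C hLC
    rw [hf] at this
    simpa using this
  exact ⟨LinearMap.ext hf, LinearMap.ext hg⟩
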